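/- For every natural number m, the sum S(m,x) := \sum_{k=0}^{m}(1+xq^k)\binom{m}{k}_q \frac{(x;q)_{m+1}}{(q^k x^2;q)_{m+1}} x^k q^{k^2} satisfies S(m+1, x) = S(m, x) for all x, i.e., the finite quintuple sum is independent of m (as a rational function in q and x). -/

import Mathlib

/-- The q-shifted factorial `(a;q)_n = ∏_{j=0}^{n-1} (1 - a q^j)`. -/
noncomputable def qPoch {F : Type*} [Field F] (a q : F) (n : ℕ) : F :=
  ∏ j ∈ Finset.range n, (1 - a * q ^ j)

/-- The Gaussian binomial coefficient `(q;q)_m / ((q;q)_k (q;q)_{m-k})`. -/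
noncomputable def qBinom {F : Type*} [Field F] (q : F) (m k : ℕ) : F :=
  qPoch q q m / (qPoch q q k * qPoch q q (m - k))

/-- The finite quintuple sum
`S(m,x) = ∑_{k=0}^m (1+xq^k) binom(m,k)_q (x;q)_{m+1}/(q^k x^2;q)_{m+1} x^k q^{k^2}`. -/
noncomputable def quintupleSum {F : Type*} [Field F] (q x : F) (m : ℕ) : F :=
  ∑ k ∈ Finset.range (m + 1),
    (1 + x * q ^ k) * qBinom q m k *
      (qPoch x q (m + 1) / qPoch (q ^ k * x ^ 2) q (m + 1)) * x ^ k * q ^ (k ^ 2)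

/-- The WZ certificate function for the quintuple sum. -/
noncomputable def quintupleG {F : Type*} [Field F] (q x : F) (m : ℕ) : ℕ → F
  | 0 => 0
  | (k + 1) => -(q ^ (m - k)) * qBinom q m k *
      (qPoch x q (m + 1) / qPoch (q ^ (k + 1) * x ^ 2) q (m + 1)) * x ^ (k + 1) *
        q ^ ((k + 1) ^ 2)

lemma qPoch_zero {F : Type*} [Field F] (a q : F) : qPoch a q 0 = 1 :=
  Finset.prod_range_zero _

lemma qPoch_succ {F : Type*} [Field F] (a q : F) (n : ℕ) :
    qPoch a q (n + 1) = qPoch a q n * (1 - a * q ^ n) :=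
  Finset.prod_range_succ _ _

lemma qPoch_succ' {F : Type*} [Field F] (a q : F) (n : ℕ) :
    qPoch a q (n + 1) = (1 - a) * qPoch (a * q) q n := by
  unfold qPoch
  rw [Finset.prod_range_succ']
  rw [mul_comm]
  congr 1
  · simp
  · exact Finset.prod_congr rfl fun i _ => by ring_nf

lemma qPoch_shift {F : Type*} [Field F] (a q : F) (n : ℕ) :
    (1 - a) * qPoch (a * q) q n = qPoch a q n * (1 - a * q ^ n) := by
  rw [← qPoch_succ', qPoch_succ]

lemma qPoch_q_ne_zero {F : Type*} [Field F] {q : F}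
    (hq : ∀ j : ℕ, 1 - q ^ (j + 1) ≠ 0) (n : ℕ) : qPoch q q n ≠ 0 := by
  unfold qPoch
  refine Finset.prod_ne_zero_iff.mpr fun j _ => ?_
  have := hq j
  rwa [pow_succ, mul_comm] at this

lemma qPoch_x2_ne_zero {F : Type*} [Field F] {q x : F}
    (hx : ∀ j : ℕ, 1 - x ^ 2 * q ^ j ≠ 0) (k n : ℕ) :
    qPoch (q ^ k * x ^ 2) q n ≠ 0 := by
  unfold qPoch
  refine Finset.prod_ne_zero_iff.mpr fun j _ => ?_
  have := hx (k + j)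
  intro h
  apply this
  rw [← h, pow_add]; ring

lemma one_sub_x2_pow_ne_zero {F : Type*} [Field F] {q x : F}
    (hx : ∀ j : ℕ, 1 - x ^ 2 * q ^ j ≠ 0) (k : ℕ) :
    1 - q ^ k * x ^ 2 ≠ 0 := by
  have := hx k; intro h; apply this; rw [← h]; ring

lemma one_sub_x2_pow_pow_ne_zero {F : Type*} [Field F] {q x : F}
    (hx : ∀ j : ℕ, 1 - x ^ 2 * q ^ j ≠ 0) (k i : ℕ) :
    1 - q ^ k * x ^ 2 * q ^ i ≠ 0 := by
  have := hx (k + i); intro h; apply this; rw [← h, pow_add]; ring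

lemma one_sub_q_pow_ne_zero {F : Type*} [Field F] {q : F}
    (hq : ∀ j : ℕ, 1 - q ^ (j + 1) ≠ 0) (j : ℕ) :
    1 - q * q ^ j ≠ 0 := by
  have := hq j; rwa [pow_succ, mul_comm] at this


/-- Abstract form of the WZ recurrence, over opaque atoms. -/
lemma quintuple_key {F : Type*} [Field F] (q x u v X Q Pj Pn Pm C D D2 : F)
    (hPj : Pj ≠ 0) (hPn : Pn ≠ 0)
    (h1 : 1 - q * u ≠ 0) (h2 : 1 - q * v ≠ 0)
    (h4 : 1 - q * u * x ^ 2 ≠ 0) (h5 : 1 - q * u * x ^ 2 * (q ^ 2 * u * v) ≠ 0)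
    (hD : D ≠ 0) (hD2 : D2 ≠ 0)
    (hrel : (1 - q * u * x ^ 2) * D2 = D * (1 - q * u * x ^ 2 * (q ^ 2 * u * v))) :
    (1 + x * (q * u)) *
        (Pm * (1 - q * (q * u * v)) / (Pj * (1 - q * u) * (Pn * (1 - q * v)))) *
        (C * (1 - x * (q ^ 2 * u * v)) / (D * (1 - q * u * x ^ 2 * (q ^ 2 * u * v)))) *
        (x * X) * Q
      - (1 + x * (q * u)) * (Pm / (Pj * (1 - q * u) * Pn)) * (C / D) * (x * X) * Q
      = -v * (Pm / (Pj * (1 - q * u) * Pn)) * (C / D2) * (x ^ 2 * X) *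
          (Q * u ^ 2 * q ^ 3)
        - (-(q * v)) * (Pm / (Pj * (Pn * (1 - q * v)))) * (C / D) * (x * X) * Q := by
  have hsub : C / D2 = C * (1 - q * u * x ^ 2) / (D * (1 - q * u * x ^ 2 * (q ^ 2 * u * v))) := by
    rw [div_eq_div_iff hD2 (mul_ne_zero hD h5)]
    linear_combination (-C) * hrel
  rw [hsub]
  have h5' : (1 : F) - x ^ 2 * q ^ 3 * u ^ 2 * v ≠ 0 := by
    intro h; apply h5; linear_combination h
  field_simp [h5']
  ring

set_option maxHeartbeats 1600000 in
/-- The key WZ-pair recurrence for `k ≤ m`. -/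
lemma quintuple_step {F : Type*} [Field F] (q x : F)
    (hx : ∀ j : ℕ, 1 - x ^ 2 * q ^ j ≠ 0) (hq : ∀ j : ℕ, 1 - q ^ (j + 1) ≠ 0)
    (m k : ℕ) (hk : k ≤ m) :
    (1 + x * q ^ k) * qBinom q (m + 1) k *
        (qPoch x q (m + 2) / qPoch (q ^ k * x ^ 2) q (m + 2)) * x ^ k * q ^ (k ^ 2)
      - (1 + x * q ^ k) * qBinom q m k *
        (qPoch x q (m + 1) / qPoch (q ^ k * x ^ 2) q (m + 1)) * x ^ k * q ^ (k ^ 2)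
      = quintupleG q x m (k + 1) - quintupleG q x m k := by
  have hPq := qPoch_q_ne_zero hq
  rcases k with _ | j
  · -- k = 0
    have h0 : (1 : F) - x ^ 2 ≠ 0 := by have := hx 0; simpa using this
    have hD1 : qPoch (q ^ (0 + 1) * x ^ 2) q (m + 1)
        = qPoch (x ^ 2) q (m + 1) * (1 - x ^ 2 * q ^ (m + 1)) / (1 - x ^ 2) := by
      rw [eq_div_iff h0]
      have h := qPoch_shift (x ^ 2) q (m + 1)
      have e : x ^ 2 * q = q ^ (0 + 1) * x ^ 2 := by ring
      rw [e] at h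
      linear_combination h
    simp only [quintupleG, qBinom, Nat.sub_zero, pow_zero, one_mul, mul_one,
      qPoch_zero, sub_zero]
    rw [show m + 2 = m + 1 + 1 from rfl, qPoch_succ x q (m + 1),
      qPoch_succ (x ^ 2) q (m + 1), hD1]
    have h1 : (1 : F) - x ^ 2 * q ^ (m + 1) ≠ 0 := hx (m + 1)
    have hC := hPq (m + 1)
    have hPm := hPq m
    have hD0 : qPoch (x ^ 2) q (m + 1) ≠ 0 := by
      have := qPoch_x2_ne_zero hx 0 (m + 1)
      simpa using this
    set Pm := qPoch q q m with hPmdef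
    set Pm1 := qPoch q q (m + 1) with hPm1def
    set C := qPoch x q (m + 1) with hCdef
    set D0 := qPoch (x ^ 2) q (m + 1) with hD0def
    clear_value Pm Pm1 C D0
    field_simp
    ring
  · -- k = j + 1
    obtain ⟨n, rfl⟩ : ∃ n, m = j + 1 + n := ⟨m - (j + 1), by omega⟩
    simp only [quintupleG, qBinom]
    rw [show j + 1 + n + 1 - (j + 1) = n + 1 by omega,
      show j + 1 + n - (j + 1) = n by omega,
      show j + 1 + n - j = n + 1 by omega]
    rw [show j + 1 + n + 2 = (j + 1 + n + 1) + 1 from rfl,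
      qPoch_succ x q (j + 1 + n + 1),
      qPoch_succ (q ^ (j + 1) * x ^ 2) q (j + 1 + n + 1),
      show j + 1 + n + 1 = (j + 1 + n) + 1 from rfl,
      qPoch_succ q q (j + 1 + n),
      qPoch_succ q q j,
      qPoch_succ q q n]
    have hPj := hPq j
    have hPn := hPq n
    have h1 := one_sub_q_pow_ne_zero hq j
    have h2 := one_sub_q_pow_ne_zero hq n
    have h4 := one_sub_x2_pow_ne_zero hx (j + 1)
    have h5 := one_sub_x2_pow_pow_ne_zero hx (j + 1) (j + 1 + n + 1)
    have hDk := qPoch_x2_ne_zero hx (j + 1) (j + 1 + n + 1)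
    have hDk2 := qPoch_x2_ne_zero hx (j + 1 + 1) (j + 1 + n + 1)
    set Pj := qPoch q q j with hPjdef
    set Pn := qPoch q q n with hPndef
    set Pm' := qPoch q q (j + 1 + n) with hPm'def
    set C := qPoch x q (j + 1 + n + 1) with hCdef
    set D := qPoch (q ^ (j + 1) * x ^ 2) q (j + 1 + n + 1) with hDdef
    set D2 := qPoch (q ^ (j + 1 + 1) * x ^ 2) q (j + 1 + n + 1) with hD2def
    clear_value Pj Pn Pm' C D D2
    have e : q ^ (j + 1) * x ^ 2 * q = q ^ (j + 1 + 1) * x ^ 2 := by ring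
    have hrel0 := qPoch_shift (q ^ (j + 1) * x ^ 2) q (j + 1 + n + 1)
    rw [e] at hrel0
    rw [← hDdef, ← hD2def] at hrel0
    have h1' : 1 - q * q ^ j ≠ 0 := h1
    have h2' : 1 - q * q ^ n ≠ 0 := h2
    have h4' : (1 : F) - q * q ^ j * x ^ 2 ≠ 0 := by
      intro h; apply h4; rw [← h]; ring
    have h5' : (1 : F) - q * q ^ j * x ^ 2 * (q ^ 2 * q ^ j * q ^ n) ≠ 0 := by
      intro h; apply h5; rw [← h]; ring
    have hrel' : (1 - q * q ^ j * x ^ 2) * D2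
        = D * (1 - q * q ^ j * x ^ 2 * (q ^ 2 * q ^ j * q ^ n)) := by
      linear_combination hrel0
    have key := quintuple_key q x (q ^ j) (q ^ n) (x ^ j) (q ^ ((j + 1) ^ 2))
      Pj Pn Pm' C D D2 hPj hPn h1' h2' h4' h5' hDk hDk2 hrel'
    linear_combination key

/-- Boundary relation: `G(m, m+1) = -T(m+1, m+1)`. -/
lemma quintuple_boundary {F : Type*} [Field F] (q x : F)
    (hx : ∀ j : ℕ, 1 - x ^ 2 * q ^ j ≠ 0) (hq : ∀ j : ℕ, 1 - q ^ (j + 1) ≠ 0)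
    (m : ℕ) :
    quintupleG q x m (m + 1)
      = -((1 + x * q ^ (m + 1)) * qBinom q (m + 1) (m + 1) *
          (qPoch x q (m + 2) / qPoch (q ^ (m + 1) * x ^ 2) q (m + 2)) * x ^ (m + 1) *
            q ^ ((m + 1) ^ 2)) := by
  have hPq := qPoch_q_ne_zero hq
  have hD := qPoch_x2_ne_zero hx (m + 1) (m + 1)
  have h5 := one_sub_x2_pow_pow_ne_zero hx (m + 1) (m + 1)
  simp only [quintupleG, qBinom, Nat.sub_self, qPoch_zero, mul_one, pow_zero]
  rw [show m + 2 = m + 1 + 1 from rfl,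
    qPoch_succ x q (m + 1), qPoch_succ (q ^ (m + 1) * x ^ 2) q (m + 1)]
  have hPm := hPq m
  have hPm1 := hPq (m + 1)
  have h5' : (1 : F) - x ^ 2 * q ^ (m + 1) * q ^ (m + 1) ≠ 0 := by
    intro h; apply h5; linear_combination h
  field_simp [h5']
  ring_nf
  have h6 : (1 : F) - x ^ 2 * q ^ 2 * q ^ (m * 2) ≠ 0 := by
    intro h; apply h5'; linear_combination h
  field_simp [h6]
  ring

/-- The finite quintuple sum is independent of `m`. -/
theorem quintupleSum_succ_eq {F : Type*} [Field F] (q x : F) (m : ℕ)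
    (hx : ∀ j : ℕ, 1 - x ^ 2 * q ^ j ≠ 0) (hq : ∀ j : ℕ, 1 - q ^ (j + 1) ≠ 0) :
    quintupleSum q x (m + 1) = quintupleSum q x m := by
  have tele : ∑ k ∈ Finset.range (m + 1),
      (quintupleG q x m (k + 1) - quintupleG q x m k)
      = quintupleG q x m (m + 1) - quintupleG q x m 0 :=
    Finset.sum_range_sub (quintupleG q x m) (m + 1)
  have hcong : ∑ k ∈ Finset.range (m + 1),
      (1 + x * q ^ k) * qBinom q (m + 1) k *
        (qPoch x q (m + 2) / qPoch (q ^ k * x ^ 2) q (m + 2)) * x ^ k * q ^ (k ^ 2)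
      = ∑ k ∈ Finset.range (m + 1),
        ((1 + x * q ^ k) * qBinom q m k *
          (qPoch x q (m + 1) / qPoch (q ^ k * x ^ 2) q (m + 1)) * x ^ k * q ^ (k ^ 2)
        + (quintupleG q x m (k + 1) - quintupleG q x m k)) := by
    refine Finset.sum_congr rfl fun k hkmem => ?_
    have hk : k ≤ m := Nat.lt_succ_iff.mp (Finset.mem_range.mp hkmem)
    have := quintuple_step q x hx hq m k hk
    linear_combination this
  simp only [quintupleSum]
  rw [show m + 1 + 1 = (m + 1) + 1 from rfl, Finset.sum_range_succ, hcong,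
    Finset.sum_add_distrib, tele, quintuple_boundary q x hx hq m]
  simp only [quintupleG]
  ring
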